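/- Let k be a field of characteristic p > 0 and let k'/k be a finite field extension. Then the degree of imperfection of k' equals the degree of imperfection of k; that is, [k' : k'^p] = [k : k^p]. -/

import Mathlib

set_option autoImplicit false

universe u

/-- The subfield `K^p ⊆ K` of `p`-th powers. -/
def pPowSubfield (K : Type u) [Field K] (p : ℕ) : Subfield K :=
  Subfield.closure {x : K | ∃ y : K, y ^ p = x}

private lemma cardinal_cancel {n a b : Cardinal.{u}} (h0 : n ≠ 0) (hn : n < Cardinal.aleph0)
    (h : n * a = n * b) : a = b := by
  rcases lt_or_ge a Cardinal.aleph0 with ha | ha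
  · have hb : b < Cardinal.aleph0 := by
      have h1 : n * b < Cardinal.aleph0 := h ▸ Cardinal.mul_lt_aleph0 hn ha
      exact lt_of_le_of_lt (le_mul_of_one_le_left (Cardinal.zero_le b)
        (Cardinal.one_le_iff_ne_zero.2 h0)) h1
    obtain ⟨n', rfl⟩ := Cardinal.lt_aleph0.1 hn
    obtain ⟨a', rfl⟩ := Cardinal.lt_aleph0.1 ha
    obtain ⟨b', rfl⟩ := Cardinal.lt_aleph0.1 hb
    rw [← Nat.cast_mul, ← Nat.cast_mul, Nat.cast_inj] at h
    have hn0 : 0 < n' := Nat.pos_of_ne_zero (by simpa using h0)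
    exact_mod_cast Nat.eq_of_mul_eq_mul_left hn0 h
  · have hb : Cardinal.aleph0 ≤ b := by
      by_contra hb
      push_neg at hb
      have h1 : n * b < Cardinal.aleph0 := Cardinal.mul_lt_aleph0 hn hb
      rw [← h] at h1
      exact absurd (le_trans ha (le_mul_of_one_le_left (Cardinal.zero_le a)
        (Cardinal.one_le_iff_ne_zero.2 h0))) (not_le.2 h1)
    rw [Cardinal.mul_eq_right ha (le_of_lt (lt_of_lt_of_le hn ha)) h0,
        Cardinal.mul_eq_right hb (le_of_lt (lt_of_lt_of_le hn hb)) h0] at h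
    exact h

private lemma pPowSubfield_eq_fieldRange (K : Type u) [Field K] (p : ℕ) [Fact p.Prime]
    [CharP K p] : pPowSubfield K p = (frobenius K p).fieldRange := by
  rw [pPowSubfield]
  have hset : {x : K | ∃ y : K, y ^ p = x} = ((frobenius K p).fieldRange : Set K) := by
    ext x
    simp [RingHom.mem_fieldRange, frobenius_def]
  rw [hset, Subfield.closure_eq]

/-- the degree of imperfection is insensitive to finite field extensions:
if `k'/k` is a finite extension of fields of characteristic `p > 0`, then
`[k' : k'^p] = [k : k^p]`. -/
theorem rank_pPow_eq_of_finite (p : ℕ) (hp : p.Prime)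
    (k k' : Type u) [Field k] [Field k'] [CharP k p]
    [Algebra k k'] [FiniteDimensional k k'] :
    Module.rank (pPowSubfield k' p) k' = Module.rank (pPowSubfield k p) k := by
  haveI := Fact.mk hp
  haveI : CharP k' p := charP_of_injective_algebraMap (algebraMap k k').injective p
  set φ : k' →+* k' := frobenius k' p with hφ
  set g : k →+* k' := φ.comp (algebraMap k k') with hg
  set A' : Subfield k' := g.fieldRange with hA'
  set F : Subfield k' := (algebraMap k k').fieldRange with hF
  set B : Subfield k' := φ.fieldRange with hB
  have hA'F : A' ≤ F := by
    rintro x ⟨y, rfl⟩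
    exact ⟨y ^ p, by simp [hg, hφ, frobenius_def, map_pow]⟩
  have hA'B : A' ≤ B := by
    rintro x ⟨y, rfl⟩
    exact ⟨algebraMap k k' y, rfl⟩
  letI : Algebra A' F := (Subfield.inclusion hA'F).toAlgebra
  letI : Algebra A' B := (Subfield.inclusion hA'B).toAlgebra
  haveI : IsScalarTower A' F k' := IsScalarTower.of_algebraMap_eq fun x => rfl
  haveI : IsScalarTower A' B k' := IsScalarTower.of_algebraMap_eq fun x => rfl
  -- the equivalence `k ≃+* F`
  have hFsurj : Function.Surjective (algebraMap k k').rangeRestrictField := by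
    rintro ⟨x, y, rfl⟩
    exact ⟨y, rfl⟩
  let eF : k ≃+* F := RingEquiv.ofBijective (algebraMap k k').rangeRestrictField
    ⟨fun a b hab => (algebraMap k k').injective congr(($hab : k')), hFsurj⟩
  -- the equivalence `k ≃+* A'`
  have hgsurj : Function.Surjective g.rangeRestrictField := by
    rintro ⟨x, y, rfl⟩
    exact ⟨y, rfl⟩
  let eA' : k ≃+* A' := RingEquiv.ofBijective g.rangeRestrictField
    ⟨fun a b hab => g.injective congr(($hab : k')), hgsurj⟩
  -- the equivalence `k' ≃+* B`
  have hφsurj : Function.Surjective φ.rangeRestrictField := by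
    rintro ⟨x, y, rfl⟩
    exact ⟨y, rfl⟩
  let eB : k' ≃+* B := RingEquiv.ofBijective φ.rangeRestrictField
    ⟨fun a b hab => φ.injective congr(($hab : k')), hφsurj⟩
  -- the equivalence `pPowSubfield k p ≃+* A'`
  have hmem : ∀ a : pPowSubfield k p, algebraMap k k' a ∈ A' := by
    rintro ⟨a, ha⟩
    rw [pPowSubfield_eq_fieldRange k p] at ha
    obtain ⟨y, hy⟩ := ha
    exact ⟨y, by simp [hg, hφ, frobenius_def, ← hy, map_pow]⟩
  let hA : (pPowSubfield k p) →+* A' :=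
  { toFun := fun a => ⟨algebraMap k k' a, hmem a⟩
    map_one' := Subtype.ext (by simp)
    map_mul' := fun a b => Subtype.ext (by push_cast; simp)
    map_zero' := Subtype.ext (by simp)
    map_add' := fun a b => Subtype.ext (by push_cast; simp) }
  have hAbij : Function.Bijective hA := by
    constructor
    · intro a b hab
      exact Subtype.ext ((algebraMap k k').injective (Subtype.ext_iff.1 hab))
    · rintro ⟨x, y, rfl⟩
      refine ⟨⟨y ^ p, Subfield.subset_closure ⟨y, rfl⟩⟩, Subtype.ext ?_⟩
      simp [hA, hg, hφ, frobenius_def, map_pow]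
  let eA : (pPowSubfield k p) ≃+* A' := RingEquiv.ofBijective hA hAbij
  -- rank identities via the equivalences
  have e1 : Module.rank (pPowSubfield k p) k = Module.rank A' F :=
    Algebra.rank_eq_of_equiv_equiv eA eF (RingHom.ext fun a => Subtype.ext rfl)
  have e2 : Module.rank k k' = Module.rank A' B :=
    Algebra.rank_eq_of_equiv_equiv eA' eB (RingHom.ext fun a => Subtype.ext rfl)
  have e3 : Module.rank k k' = Module.rank F k' :=
    Algebra.rank_eq_of_equiv_equiv eF (RingEquiv.refl k') (RingHom.ext fun a => rfl)
  -- tower identities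
  have t1 : Module.rank A' F * Module.rank F k' = Module.rank A' k' := rank_mul_rank A' F k'
  have t2 : Module.rank A' B * Module.rank B k' = Module.rank A' k' := rank_mul_rank A' B k'
  have key : Module.rank k k' * Module.rank (pPowSubfield k p) k
      = Module.rank k k' * Module.rank B k' := by
    calc Module.rank k k' * Module.rank (pPowSubfield k p) k
        = Module.rank A' F * Module.rank F k' := by rw [e1, e3, mul_comm]
      _ = Module.rank A' k' := t1
      _ = Module.rank A' B * Module.rank B k' := t2.symm
      _ = Module.rank k k' * Module.rank B k' := by rw [e2]
  have h0 : Module.rank k k' ≠ 0 := rank_pos.ne'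
  rw [pPowSubfield_eq_fieldRange k' p]
  exact (cardinal_cancel h0 (Module.rank_lt_aleph0 k k') key).symm
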